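/- Let A be a nonnegative integer matrix such that A⁻¹[t] has the sequential interval property for every t ∈ ℤ₊^r. Then the reduced lex Gröbner basis G for the toric ideal I_A with ordering x₁ > x₂ > ⋯ > x_d has the property that for each i = 1,…,d every element of G lying in ℚ[x_i,…,x_d] is square-free in x_i. -/

import Mathlib

open Matrix MvPolynomial

namespace SIS

variable {r d : ℕ}

/-- The integer matrix obtained from a nonnegative-integer matrix. -/
def intMat (A : Matrix (Fin r) (Fin d) ℕ) : Matrix (Fin r) (Fin d) ℤ :=
  fun i j => (A i j : ℤ)

/-- The rational matrix obtained from a nonnegative-integer matrix. -/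
def ratMat (A : Matrix (Fin r) (Fin d) ℕ) : Matrix (Fin r) (Fin d) ℚ :=
  fun i j => (A i j : ℚ)

def natToInt (v : Fin d → ℕ) : Fin d → ℤ := fun i => (v i : ℤ)

/-- `A⁻¹[t]`: nonnegative integer tables with constraint value `t`. -/
def tables (A : Matrix (Fin r) (Fin d) ℕ) (t : Fin r → ℕ) : Set (Fin d → ℕ) :=
  {n | A.mulVec n = t}

/-- `A_ℚ⁻¹[t]`: nonnegative rational points with constraint value `t`. -/
def ratTables (A : Matrix (Fin r) (Fin d) ℕ) (t : Fin r → ℕ) : Set (Fin d → ℚ) :=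
  {q | (∀ i, 0 ≤ q i) ∧ (ratMat A).mulVec q = fun i => (t i : ℚ)}

/-- ker_ℤ(A). -/
def kerZ (A : Matrix (Fin r) (Fin d) ℕ) : Set (Fin d → ℤ) :=
  {m | (intMat A).mulVec m = 0}

/-- The some nonempty subset of the rows of `A` sums to a strictly positive vector. -/
def RowsPos (A : Matrix (Fin r) (Fin d) ℕ) : Prop :=
  ∃ R : Finset (Fin r), R.Nonempty ∧ ∀ j, 0 < ∑ i ∈ R, A i j

/-- `u` and `v` are connected using moves from `M`, staying componentwise nonnegative. -/
def connects (M : Set (Fin d → ℤ)) (u v : Fin d → ℕ) : Prop :=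
  ∃ l : List (Fin d → ℤ), (∀ m ∈ l, m ∈ M) ∧
    natToInt u = natToInt v + l.sum ∧
    ∀ k, k ≤ l.length → ∀ i, 0 ≤ natToInt v i + (l.take k).sum i

/-- A Markov basis for `A`. -/
def IsMarkovBasis (A : Matrix (Fin r) (Fin d) ℕ) (M : Set (Fin d → ℤ)) : Prop :=
  M.Finite ∧ M ⊆ kerZ A ∧
    ∀ u v : Fin d → ℕ, A.mulVec u = A.mulVec v → connects M u v

/-- A Markov subbasis for `A` and the fixed value `t`. -/
def IsMarkovSubbasis (A : Matrix (Fin r) (Fin d) ℕ) (t : Fin r → ℕ)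
    (M : Set (Fin d → ℤ)) : Prop :=
  M.Finite ∧ M ⊆ kerZ A ∧ ∀ u ∈ tables A t, ∀ v ∈ tables A t, connects M u v

/-- A set of (nonnegative) integers is an interval of integers. -/
def IsIntInterval (S : Set ℕ) : Prop :=
  ∀ a ∈ S, ∀ b ∈ S, ∀ c : ℕ, a ≤ c → c ≤ b → c ∈ S

/-- The set of feasible values of cell `i` given that cells `j < i` are fixed to `w j`;
this is the set `π₁(A_{i}⁻¹[t - Σ_{j<i} w_j a_j])` of the paper. -/
def stepSet (A : Matrix (Fin r) (Fin d) ℕ) (t : Fin r → ℕ) (i : Fin d)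
    (w : Fin d → ℕ) : Set ℕ :=
  {c | ∃ n ∈ tables A t, (∀ j, j < i → n j = w j) ∧ n i = c}

/-- The sequential interval property for `A⁻¹[t]`. -/
def SeqIntervalProperty (A : Matrix (Fin r) (Fin d) ℕ) (t : Fin r → ℕ) : Prop :=
  ∀ i : Fin d, ∀ w : Fin d → ℕ, IsIntInterval (stepSet A t i w)

/-- m⁺. -/
def posPart (m : Fin d → ℤ) : Fin d → ℕ := fun i => (m i).toNat

/-- m⁻. -/
def negPart (m : Fin d → ℤ) : Fin d → ℕ := fun i => (-(m i)).toNat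

/-- The monomial `x^ν`. -/
noncomputable def monom (ν : Fin d → ℕ) : MvPolynomial (Fin d) ℚ :=
  MvPolynomial.monomial (Finsupp.equivFunOnFinite.symm ν) 1

/-- The binomial `x^{m⁺} - x^{m⁻}` of a Markov move `m`. -/
noncomputable def moveBinomial (m : Fin d → ℤ) : MvPolynomial (Fin d) ℚ :=
  monom (posPart m) - monom (negPart m)

/-- The toric ideal `I_A`. -/
noncomputable def toricIdeal (A : Matrix (Fin r) (Fin d) ℕ) : Ideal (MvPolynomial (Fin d) ℚ) :=
  Ideal.span {f | ∃ u v : Fin d → ℕ, A.mulVec u = A.mulVec v ∧ f = monom u - monom v}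

/-- Lexicographic order on exponent vectors with `x₁ > x₂ > ⋯ > x_d`:
`μ <lex ν` iff the first nonzero entry of `ν - μ` is positive. -/
def lexLt (μ ν : Fin d →₀ ℕ) : Prop :=
  ∃ i : Fin d, μ i < ν i ∧ ∀ j, j < i → μ j = ν j

/-- `ν` is the lex-leading exponent of `p`. -/
def IsLexLead (p : MvPolynomial (Fin d) ℚ) (ν : Fin d →₀ ℕ) : Prop :=
  ν ∈ p.support ∧ ∀ μ ∈ p.support, μ ≠ ν → lexLt μ ν

/-- `x^νg` divides `x^νf`. -/
def expDivides (νg νf : Fin d →₀ ℕ) : Prop := ∀ i, νg i ≤ νf i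

/-- `G` is a lex Gröbner basis for `I` (ordering `x₁ > x₂ > ⋯ > x_d`). -/
def IsLexGB (G : Set (MvPolynomial (Fin d) ℚ)) (I : Ideal (MvPolynomial (Fin d) ℚ)) : Prop :=
  G.Finite ∧ (∀ g ∈ G, g ≠ 0 ∧ g ∈ I) ∧
    ∀ f ∈ I, f ≠ 0 → ∃ g ∈ G, ∃ νg νf,
      IsLexLead g νg ∧ IsLexLead f νf ∧ expDivides νg νf

/-- Graded reverse lexicographic order with `x_d > x_{d-1} > ⋯ > x₁`:
`μ <grevlex ν` iff deg μ < deg ν, or degrees agree and the first nonzero entry of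
`ν - μ` (scanning coordinates `1, 2, …, d`) is negative. -/
def grevlexLt (μ ν : Fin d →₀ ℕ) : Prop :=
  (∑ i, μ i) < (∑ i, ν i) ∨
    ((∑ i, μ i) = (∑ i, ν i) ∧ ∃ i : Fin d, ν i < μ i ∧ ∀ j, j < i → μ j = ν j)

/-- `ν` is the grevlex-leading exponent of `p`. -/
def IsGrevlexLead (p : MvPolynomial (Fin d) ℚ) (ν : Fin d →₀ ℕ) : Prop :=
  ν ∈ p.support ∧ ∀ μ ∈ p.support, μ ≠ ν → grevlexLt μ ν

/-- `G` is a grevlex Gröbner basis for `I` (ordering `x_d > ⋯ > x₁`). -/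
def IsGrevlexGB (G : Set (MvPolynomial (Fin d) ℚ)) (I : Ideal (MvPolynomial (Fin d) ℚ)) : Prop :=
  G.Finite ∧ (∀ g ∈ G, g ≠ 0 ∧ g ∈ I) ∧
    ∀ f ∈ I, f ≠ 0 → ∃ g ∈ G, ∃ νg νf,
      IsGrevlexLead g νg ∧ IsGrevlexLead f νf ∧ expDivides νg νf

/-- `p` is square-free in `x_i`. -/
def SquareFreeIn (p : MvPolynomial (Fin d) ℚ) (i : Fin d) : Prop :=
  ∀ ν ∈ p.support, ν i ≤ 1

/-- `p` lies in `ℚ[x_i, …, x_d]`. -/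
def OnlyVarsFrom (p : MvPolynomial (Fin d) ℚ) (i : Fin d) : Prop :=
  ∀ ν ∈ p.support, ∀ j, j < i → ν j = 0

/-- The toric ideal `I_{A_j}` of the submatrix of the last columns, viewed inside
`ℚ[x₁, …, x_d]`. -/
noncomputable def toricIdealFrom (A : Matrix (Fin r) (Fin d) ℕ) (j : Fin d) :
    Ideal (MvPolynomial (Fin d) ℚ) :=
  Ideal.span {f | ∃ u v : Fin d → ℕ, (∀ k, k < j → u k = 0) ∧ (∀ k, k < j → v k = 0) ∧
    A.mulVec u = A.mulVec v ∧ f = monom u - monom v}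


/-- `G` is the reduced lex Gröbner basis for `I`: a lex Gröbner basis whose elements
are monic and such that no monomial occurring in an element of `G` is divisible by
the lex-leading monomial of a different element of `G`. -/
def IsReducedLexGB (G : Set (MvPolynomial (Fin d) ℚ))
    (I : Ideal (MvPolynomial (Fin d) ℚ)) : Prop :=
  IsLexGB G I ∧
    (∀ g ∈ G, ∃ ν, IsLexLead g ν ∧ MvPolynomial.coeff ν g = 1) ∧
    ∀ g ∈ G, ∀ g' ∈ G, g' ≠ g → ∀ ν ∈ g.support, ∀ ν',
      IsLexLead g' ν' → ¬ expDivides ν' ν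

/-! ### Auxiliary lemmas -/

section Aux

lemma lexLt_irrefl (μ : Fin d →₀ ℕ) : ¬ lexLt μ μ := by
  rintro ⟨i, hi, -⟩; exact lt_irrefl _ hi

lemma lexLt_asymm {μ ν : Fin d →₀ ℕ} (h1 : lexLt μ ν) (h2 : lexLt ν μ) : False := by
  obtain ⟨i, hi, hj⟩ := h1
  obtain ⟨i', hi', hj'⟩ := h2
  rcases lt_trichotomy i i' with h | h | h
  · have := hj' i h; omega
  · subst h; omega
  · have := hj i' h; omega

lemma ne_exists_min {μ ν : Fin d →₀ ℕ} (h : μ ≠ ν) :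
    ∃ i, μ i ≠ ν i ∧ ∀ j, j < i → μ j = ν j := by
  classical
  obtain ⟨i0, hi0⟩ := Finsupp.ne_iff.mp h
  set s : Finset (Fin d) := Finset.univ.filter (fun j => μ j ≠ ν j) with hs_def
  have hs : s.Nonempty := ⟨i0, by simp [hs_def, hi0]⟩
  refine ⟨s.min' hs, ?_, ?_⟩
  · have := s.min'_mem hs
    simp only [hs_def, Finset.mem_filter, Finset.mem_univ, true_and] at this
    exact this
  · intro j hj
    by_contra hc
    have hjs : j ∈ s := by simp [hs_def, hc]
    exact absurd (s.min'_le j hjs) (not_le.mpr hj)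

lemma lexLt_total {μ ν : Fin d →₀ ℕ} (h : μ ≠ ν) : lexLt μ ν ∨ lexLt ν μ := by
  obtain ⟨i, hi, hj⟩ := ne_exists_min h
  rcases lt_or_gt_of_ne hi with h' | h'
  · exact Or.inl ⟨i, h', hj⟩
  · exact Or.inr ⟨i, h', fun j hjlt => (hj j hjlt).symm⟩

lemma lexLt_of_le {μ ν : Fin d →₀ ℕ} (hle : ∀ j, μ j ≤ ν j) (h : μ ≠ ν) : lexLt μ ν := by
  obtain ⟨i, hi, hj⟩ := ne_exists_min h
  exact ⟨i, lt_of_le_of_ne (hle i) hi, hj⟩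

lemma lexLead_unique {p : MvPolynomial (Fin d) ℚ} {a b : Fin d →₀ ℕ}
    (ha : IsLexLead p a) (hb : IsLexLead p b) : a = b := by
  by_contra h
  exact lexLt_asymm (hb.2 a ha.1 h) (ha.2 b hb.1 (Ne.symm h))

lemma coeff_binomial (u v w : Fin d →₀ ℕ) :
    MvPolynomial.coeff w
        ((MvPolynomial.monomial u) (1:ℚ) - (MvPolynomial.monomial v) 1)
      = (if u = w then (1:ℚ) else 0) - (if v = w then 1 else 0) := by
  classical
  rw [MvPolynomial.coeff_sub, MvPolynomial.coeff_monomial, MvPolynomial.coeff_monomial]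

lemma binomial_ne_zero {u v : Fin d →₀ ℕ} (h : u ≠ v) :
    ((MvPolynomial.monomial u) (1:ℚ) - (MvPolynomial.monomial v) 1) ≠ 0 := by
  intro hc
  have h2 := coeff_binomial u v u
  rw [hc, MvPolynomial.coeff_zero, if_pos rfl, if_neg (Ne.symm h)] at h2
  norm_num at h2

lemma isLexLead_binomial {u v : Fin d →₀ ℕ} (h : lexLt v u) :
    IsLexLead ((MvPolynomial.monomial u) (1:ℚ) - (MvPolynomial.monomial v) 1) u := by
  classical
  have hne : u ≠ v := by
    rintro rfl; exact lexLt_irrefl u h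
  constructor
  · rw [MvPolynomial.mem_support_iff, coeff_binomial, if_pos rfl, if_neg (Ne.symm hne)]
    norm_num
  · intro μ hμ hμu
    rw [MvPolynomial.mem_support_iff, coeff_binomial] at hμ
    by_cases h1 : u = μ
    · exact absurd h1.symm hμu
    · by_cases h2 : v = μ
      · exact h2 ▸ h
      · simp [h1, h2] at hμ

lemma binomial_mem_toricIdeal (A : Matrix (Fin r) (Fin d) ℕ) {u v : Fin d → ℕ}
    (h : A.mulVec u = A.mulVec v) : monom u - monom v ∈ toricIdeal A :=
  Ideal.subset_span ⟨u, v, h, rfl⟩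

/-- The `A`-grading homomorphism `x_j ↦ y^{a_j}`. -/
noncomputable def gradeHom (A : Matrix (Fin r) (Fin d) ℕ) :
    MvPolynomial (Fin d) ℚ →ₐ[ℚ] MvPolynomial (Fin r) ℚ :=
  MvPolynomial.aeval (fun j => monom (fun k => A k j))

lemma prod_monomial_one {τ : Type*} (s : Finset τ) (f : τ → (Fin r →₀ ℕ)) :
    (∏ j ∈ s, (MvPolynomial.monomial (f j)) (1:ℚ)) = (MvPolynomial.monomial (∑ j ∈ s, f j)) 1 := by
  classical
  induction s using Finset.induction with
  | empty => simp
  | insert _ _ h ih =>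
      rw [Finset.prod_insert h, Finset.sum_insert h, ih, MvPolynomial.monomial_mul, one_mul]

lemma gradeHom_monomial (A : Matrix (Fin r) (Fin d) ℕ) (w : Fin d →₀ ℕ) (c : ℚ) :
    gradeHom A ((MvPolynomial.monomial w) c)
      = (MvPolynomial.monomial (Finsupp.equivFunOnFinite.symm (A.mulVec ⇑w))) c := by
  classical
  rw [gradeHom, MvPolynomial.aeval_monomial]
  have h1 : (w.prod fun j k => (monom (fun i => A i j) : MvPolynomial (Fin r) ℚ) ^ k)
      = (MvPolynomial.monomial
          (∑ j ∈ w.support, w j • Finsupp.equivFunOnFinite.symm (fun i => A i j))) (1:ℚ) := by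
    rw [Finsupp.prod, ← prod_monomial_one]
    refine Finset.prod_congr rfl fun j _ => ?_
    rw [monom, MvPolynomial.monomial_pow, one_pow]
  rw [h1]
  have h2 : (∑ j ∈ w.support, w j • Finsupp.equivFunOnFinite.symm (fun i => A i j))
      = Finsupp.equivFunOnFinite.symm (A.mulVec ⇑w) := by
    ext k
    rw [Finsupp.finset_sum_apply]
    have hrhs : (Finsupp.equivFunOnFinite.symm (A.mulVec ⇑w)) k = ∑ j, A k j * w j := by
      simp [Matrix.mulVec, dotProduct]
    rw [hrhs]
    rw [show (∑ j ∈ w.support, (w j • Finsupp.equivFunOnFinite.symm (fun i => A i j)) k)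
        = ∑ j ∈ w.support, A k j * w j from
      Finset.sum_congr rfl fun j _ => by
        simp [Finsupp.smul_apply, mul_comm]]
    refine Finset.sum_subset (Finset.subset_univ w.support) ?_
    intro j _ hj
    rw [Finsupp.notMem_support_iff.mp hj, mul_zero]
  rw [h2]
  rw [MvPolynomial.algebraMap_eq, MvPolynomial.C_mul_monomial, mul_one]

lemma gradeHom_eq_zero (A : Matrix (Fin r) (Fin d) ℕ) {p : MvPolynomial (Fin d) ℚ}
    (hp : p ∈ toricIdeal A) : gradeHom A p = 0 := by
  have hle : toricIdeal A ≤ RingHom.ker (gradeHom A).toRingHom := by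
    rw [toricIdeal]
    refine Ideal.span_le.mpr ?_
    rintro f ⟨u, v, huv, rfl⟩
    rw [SetLike.mem_coe, RingHom.mem_ker]
    have hu : (monom u : MvPolynomial (Fin d) ℚ)
        = (MvPolynomial.monomial (Finsupp.equivFunOnFinite.symm u)) 1 := rfl
    have hv : (monom v : MvPolynomial (Fin d) ℚ)
        = (MvPolynomial.monomial (Finsupp.equivFunOnFinite.symm v)) 1 := rfl
    rw [AlgHom.toRingHom_eq_coe, RingHom.coe_coe, map_sub, hu, hv,
      gradeHom_monomial, gradeHom_monomial]
    have hcu : ⇑(Finsupp.equivFunOnFinite.symm u) = u := by ext j; simp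
    have hcv : ⇑(Finsupp.equivFunOnFinite.symm v) = v := by ext j; simp
    rw [hcu, hcv, huv, sub_self]
  exact RingHom.mem_ker.mp (hle hp)

lemma exists_partner (A : Matrix (Fin r) (Fin d) ℕ) {p : MvPolynomial (Fin d) ℚ}
    (hp : p ∈ toricIdeal A) {ν : Fin d →₀ ℕ} (hν : ν ∈ p.support) :
    ∃ μ ∈ p.support, μ ≠ ν ∧ A.mulVec ⇑μ = A.mulVec ⇑ν := by
  classical
  by_contra hc
  push_neg at hc
  have h0 : gradeHom A p = 0 := gradeHom_eq_zero A hp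
  have hexp : gradeHom A p = ∑ w ∈ p.support,
      (MvPolynomial.monomial (Finsupp.equivFunOnFinite.symm (A.mulVec ⇑w)))
        (MvPolynomial.coeff w p) := by
    conv_lhs => rw [p.as_sum]
    rw [map_sum]
    exact Finset.sum_congr rfl fun w _ => gradeHom_monomial A w _
  have hco := congrArg
    (MvPolynomial.coeff (Finsupp.equivFunOnFinite.symm (A.mulVec ⇑ν))) hexp
  rw [h0, MvPolynomial.coeff_zero, MvPolynomial.coeff_sum] at hco
  simp only [MvPolynomial.coeff_monomial, EmbeddingLike.apply_eq_iff_eq] at hco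
  rw [Finset.sum_eq_single_of_mem ν hν
    (fun w hw hwne => if_neg (hc w hw hwne)), if_pos rfl] at hco
  exact (MvPolynomial.mem_support_iff.mp hν) hco.symm

lemma mulVec_ite (A : Matrix (Fin r) (Fin d) ℕ) (u : Fin d → ℕ) (i : Fin d) (c : ℕ) (k : Fin r) :
    A.mulVec (fun j => if j = i then c else u j) k + A k i * u i
      = A.mulVec u k + A k i * c := by
  classical
  simp only [Matrix.mulVec, dotProduct]
  rw [← Finset.sum_erase_add _ _ (Finset.mem_univ i),
    ← Finset.sum_erase_add Finset.univ (fun j => A k j * u j) (Finset.mem_univ i)]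
  have h1 : ∑ x ∈ Finset.univ.erase i, A k x * (if x = i then c else u x)
      = ∑ x ∈ Finset.univ.erase i, A k x * u x := by
    refine Finset.sum_congr rfl fun x hx => ?_
    rw [if_neg (Finset.ne_of_mem_erase hx)]
  rw [h1, if_pos rfl]
  ring

/-- The common final contradiction step: a binomial `x^{αf} - x^{βf}` in the toric
ideal with lead `x^{αf}` properly dividing the monomial `x^σ` of `p ∈ G`. -/
lemma contra_step (A : Matrix (Fin r) (Fin d) ℕ)
    {G : Set (MvPolynomial (Fin d) ℚ)} (hG : IsReducedLexGB G (toricIdeal A))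
    {p : MvPolynomial (Fin d) ℚ} (hp : p ∈ G)
    {σ : Fin d →₀ ℕ} (hσ : σ ∈ p.support)
    (αf βf : Fin d → ℕ)
    (hAeq : A.mulVec αf = A.mulVec βf)
    (hlt : lexLt (Finsupp.equivFunOnFinite.symm βf) (Finsupp.equivFunOnFinite.symm αf))
    (hle : ∀ j, αf j ≤ σ j) (i : Fin d) (hstrict : αf i < σ i) : False := by
  classical
  set α : Fin d →₀ ℕ := Finsupp.equivFunOnFinite.symm αf with hα
  set β : Fin d →₀ ℕ := Finsupp.equivFunOnFinite.symm βf with hβ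
  have hαcoe : ∀ j, α j = αf j := fun j => by simp [hα]
  have hq_mem : (MvPolynomial.monomial α) (1:ℚ) - (MvPolynomial.monomial β) 1
      ∈ toricIdeal A := binomial_mem_toricIdeal A hAeq
  have hαβ : α ≠ β := by
    rintro hc
    rw [hc] at hlt
    exact lexLt_irrefl β hlt
  have hq0 : (MvPolynomial.monomial α) (1:ℚ) - (MvPolynomial.monomial β) 1 ≠ 0 :=
    binomial_ne_zero hαβ
  have hlead : IsLexLead ((MvPolynomial.monomial α) (1:ℚ) - (MvPolynomial.monomial β) 1) α :=
    isLexLead_binomial hlt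
  obtain ⟨g', hg', νg, νf, hgl, hfl, hdiv⟩ := hG.1.2.2 _ hq_mem hq0
  have hνf : νf = α := lexLead_unique hfl hlead
  have hνg_le : ∀ j, νg j ≤ σ j := by
    intro j
    have := hdiv j
    rw [hνf] at this
    exact le_trans this (le_trans (le_of_eq (hαcoe j)) (hle j))
  by_cases hgp : g' = p
  · subst hgp
    obtain ⟨L, hL, _⟩ := hG.2.1 g' hp
    have hνgL : νg = L := lexLead_unique hgl hL
    subst hνgL
    have hLi : νg i < σ i := by
      have h1 := hdiv i
      rw [hνf] at h1
      have := hαcoe i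
      omega
    have hLσ : νg ≠ σ := by
      intro hc; rw [hc] at hLi; omega
    exact lexLt_asymm (lexLt_of_le hνg_le hLσ) (hL.2 σ hσ (Ne.symm hLσ))
  · exact hG.2.2 p hp g' hg' hgp σ hσ νg hgl hνg_le

/-- A natural-number cancellation helper. -/
lemma key_cancel (X Y T a v : ℕ) (hv : 2 ≤ v)
    (h1 : X + a * v = T + a * (v - 1)) (h2 : Y + a * (v - 1) = T + a * (v - 1 - 1)) :
    X = Y := by
  obtain ⟨m, rfl⟩ : ∃ m, v = m + 2 := ⟨v - 2, by omega⟩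
  have t1 : m + 2 - 1 = m + 1 := by omega
  have t2 : m + 2 - 1 - 1 = m := by omega
  rw [t2] at h2
  rw [t1] at h1 h2
  have d1 : a * (m + 2) = a * m + a + a := by ring
  have d2 : a * (m + 1) = a * m + a := by ring
  rw [d1, d2] at h1
  rw [d2] at h2
  generalize a * m = b at h1 h2
  omega

/-- Case where the bad monomial `ν` has a partner `μ` with strictly smaller `i`-entry. -/
lemma case_smaller (A : Matrix (Fin r) (Fin d) ℕ)
    (hseq : ∀ t : Fin r → ℕ, SeqIntervalProperty A t)
    {G : Set (MvPolynomial (Fin d) ℚ)} (hG : IsReducedLexGB G (toricIdeal A))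
    {p : MvPolynomial (Fin d) ℚ} (hp : p ∈ G) {i : Fin d} (honly : OnlyVarsFrom p i)
    {ν μ : Fin d →₀ ℕ} (hν : ν ∈ p.support) (hμ : μ ∈ p.support)
    (hAνμ : A.mulVec ⇑μ = A.mulVec ⇑ν)
    (h2 : 2 ≤ ν i) (hlt : μ i < ν i) : False := by
  classical
  have hνS : ν i ∈ stepSet A (A.mulVec ⇑ν) i (fun _ => 0) :=
    ⟨⇑ν, rfl, fun j hj => honly ν hν j hj, rfl⟩
  have hμS : μ i ∈ stepSet A (A.mulVec ⇑ν) i (fun _ => 0) :=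
    ⟨⇑μ, hAνμ, fun j hj => honly μ hμ j hj, rfl⟩
  obtain ⟨n, hnT, hn0, hni⟩ :=
    hseq (A.mulVec ⇑ν) i (fun _ => 0) (μ i) hμS (ν i) hνS (ν i - 1) (by omega) (by omega)
  have hnt : A.mulVec n = A.mulVec ⇑ν := hnT
  have hAeq : A.mulVec (fun j => if j = i then ν i - 1 else ν j)
      = A.mulVec (fun j => if j = i then ν i - 1 - 1 else n j) := by
    funext k
    have e1 := mulVec_ite A (⇑ν) i (ν i - 1) k
    have e2 := mulVec_ite A n i (ν i - 1 - 1) k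
    rw [hni, congrFun hnt k] at e2
    exact key_cancel _ _ _ _ (ν i) h2 e1 e2
  refine contra_step A hG hp hν
    (fun j => if j = i then ν i - 1 else ν j)
    (fun j => if j = i then ν i - 1 - 1 else n j)
    hAeq ⟨i, ?_, ?_⟩ ?_ i ?_
  · simp only [Finsupp.coe_equivFunOnFinite_symm, if_pos]
    omega
  · intro j hj
    have hjne : j ≠ i := ne_of_lt hj
    simp only [Finsupp.coe_equivFunOnFinite_symm, if_neg hjne]
    rw [hn0 j hj, honly ν hν j hj]
  · intro j
    by_cases hji : j = i
    · subst hji; simp only [if_pos]; omega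
    · simp only [if_neg hji]; exact le_refl _
  · simp only [if_pos]; omega

end Aux

/-- Proposition 3.2. If `A⁻¹[t]` has the sequential interval
property for all `t`, then the reduced lex Gröbner basis `G` for `I_A` with
`x₁ > x₂ > ⋯ > x_d` has `G ∩ ℚ[x_i, …, x_d]` square-free in `x_i` for all `i`. -/
theorem squarefree_of_seqInterval {r d : ℕ}
    (A : Matrix (Fin r) (Fin d) ℕ) (hA : RowsPos A)
    (hseq : ∀ t : Fin r → ℕ, SeqIntervalProperty A t)
    (G : Set (MvPolynomial (Fin d) ℚ))
    (hG : IsReducedLexGB G (toricIdeal A)) :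
    ∀ p ∈ G, ∀ i : Fin d, OnlyVarsFrom p i → SquareFreeIn p i := by
  classical
  intro p hp i honly ν hν
  by_contra hc
  push_neg at hc
  have h2 : 2 ≤ ν i := hc
  have hpI : p ∈ toricIdeal A := (hG.1.2.1 p hp).2
  obtain ⟨μ, hμ, hμν, hAμν⟩ := exists_partner A hpI hν
  rcases lt_trichotomy (μ i) (ν i) with h | h | h
  · exact case_smaller A hseq hG hp honly hν hμ hAμν h2 h
  · -- equal `i`-entries: cancel the `i`-th variable completely
    have hAeq0 : A.mulVec (fun j => if j = i then 0 else ν j)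
        = A.mulVec (fun j => if j = i then 0 else μ j) := by
      funext k
      have e1 := mulVec_ite A (⇑ν) i 0 k
      have e2 := mulVec_ite A (⇑μ) i 0 k
      rw [h, congrFun hAμν k] at e2
      rw [Nat.mul_zero, Nat.add_zero] at e1 e2
      exact Nat.add_right_cancel (e1.trans e2.symm)
    have hne : (Finsupp.equivFunOnFinite.symm (fun j => if j = i then 0 else ν j) : Fin d →₀ ℕ)
        ≠ Finsupp.equivFunOnFinite.symm (fun j => if j = i then 0 else μ j) := by
      intro hceq
      have hfe := Finsupp.equivFunOnFinite.symm.injective hceq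
      obtain ⟨j, hj⟩ := Finsupp.ne_iff.mp hμν
      have hjne : j ≠ i := by
        intro hji; subst hji; exact hj h
      have := congrFun hfe j
      simp only [if_neg hjne] at this
      exact hj (this.symm)
    rcases lexLt_total hne with hl | hl
    · -- μ-side is the lex bigger: use target σ := μ
      refine contra_step A hG hp hμ
        (fun j => if j = i then 0 else μ j) (fun j => if j = i then 0 else ν j)
        hAeq0.symm hl ?_ i ?_
      · intro j
        by_cases hji : j = i
        · subst hji; simp only [if_pos]; omega
        · simp only [if_neg hji]; exact le_refl _
      · simp only [if_pos]; omega
    · -- ν-side is the lex bigger: use target σ := ν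
      refine contra_step A hG hp hν
        (fun j => if j = i then 0 else ν j) (fun j => if j = i then 0 else μ j)
        hAeq0 hl ?_ i ?_
      · intro j
        by_cases hji : j = i
        · subst hji; simp only [if_pos]; omega
        · simp only [if_neg hji]; exact le_refl _
      · simp only [if_pos]; omega
  · exact case_smaller A hseq hG hp honly hμ hν hAμν.symm (by omega) h

end SIS
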